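/- Fix t ≥ 1 and a symmetric positive definite d×d real matrix Σ0. Then ∑_{i=2}^{t} ᾱ_{i−1} β_i Σ0 Σ_{i−1}^{-1} Σ_i^{-1} + β_1 Σ_1^{-1} = (1 − ᾱ_t) Σ_t^{-1}; that is, the coefficient matrix B_t^ρ of the score-scaled recursion specializes at ρ = 0 to B_t^0 = (1 − ᾱ_t) Σ_t^{-1}. -/

import Mathlib

open Matrix

private lemma smulPosDef {d : ℕ} {c : ℝ} (hc : 0 < c) {A : Matrix (Fin d) (Fin d) ℝ}
    (hA : A.PosDef) : (c • A).PosDef := by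
  refine ⟨?_, fun x hx => ?_⟩
  · show (c • A)ᴴ = c • A
    rw [Matrix.conjTranspose_smul, hA.1.eq, star_trivial]
  · exact (hA.smul hc).2 hx

private lemma smulPosSemidef {d : ℕ} {c : ℝ} (hc : 0 ≤ c) {A : Matrix (Fin d) (Fin d) ℝ}
    (hA : A.PosSemidef) : (c • A).PosSemidef := by
  refine ⟨?_, fun x => ?_⟩
  · show (c • A)ᴴ = c • A
    rw [Matrix.conjTranspose_smul, hA.1.eq, star_trivial]
  · exact (hA.smul hc).2 x

/-- The coefficient matrix `B_t^ρ` of the score-scaled recursion specializes at `ρ = 0` to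
`(1 − ᾱ_t) Σ_t⁻¹`: `∑_{i=2}^t ᾱ_{i-1} β_i Σ0 Σ_{i-1}⁻¹ Σ_i⁻¹ + β_1 Σ_1⁻¹ = (1 − ᾱ_t) Σ_t⁻¹`. -/
theorem stmt_3 (d t : ℕ) (hd : 1 ≤ d) (ht : 1 ≤ t)
    (β : ℕ → ℝ) (hβ : ∀ k, 1 ≤ k → k ≤ t → β k ∈ Set.Ioo (0:ℝ) 1)
    (al : ℕ → ℝ) (hal : ∀ k, al k = 1 - β k)
    (alb : ℕ → ℝ) (halb : ∀ k, alb k = ∏ i ∈ Finset.Icc 1 k, al i)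
    (S0 : Matrix (Fin d) (Fin d) ℝ) (hS0 : S0.PosDef)
    (S : ℕ → Matrix (Fin d) (Fin d) ℝ)
    (hS : ∀ k, S k = alb k • S0 + (1 - alb k) • (1 : Matrix (Fin d) (Fin d) ℝ)) :
    (∑ i ∈ Finset.Icc 2 t, (alb (i-1) * β i) • (S0 * (S (i-1))⁻¹ * (S i)⁻¹))
      + β 1 • (S 1)⁻¹
      = (1 - alb t) • (S t)⁻¹ := by
  -- basic facts about alb
  have hal_mem : ∀ k, 1 ≤ k → k ≤ t → al k ∈ Set.Ioo (0:ℝ) 1 := by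
    intro k h1 h2
    obtain ⟨hb0, hb1⟩ := hβ k h1 h2
    rw [hal]; constructor <;> linarith
  have halb_succ : ∀ k, alb (k+1) = alb k * al (k+1) := by
    intro k
    rw [halb, halb, Finset.prod_Icc_succ_top (Nat.le_add_left 1 k)]
  have halb_pos : ∀ k, k ≤ t → 0 < alb k ∧ alb k ≤ 1 := by
    intro k
    induction k with
    | zero => intro _; rw [halb]; simp
    | succ n ih =>
      intro hk
      obtain ⟨h0, h1⟩ := ih (le_trans (Nat.le_succ n) hk)
      obtain ⟨ha0, ha1⟩ := hal_mem (n+1) (Nat.le_add_left 1 n) hk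
      rw [halb_succ]
      constructor
      · exact mul_pos h0 ha0
      · nlinarith
  -- positive definiteness and invertibility of S k
  have hSpd : ∀ k, k ≤ t → (S k).PosDef := by
    intro k hk
    obtain ⟨h0, h1⟩ := halb_pos k hk
    rw [hS]
    exact (smulPosDef h0 hS0).add_posSemidef (smulPosSemidef (by linarith) Matrix.PosSemidef.one)
  have hinv : ∀ k, k ≤ t → S k * (S k)⁻¹ = 1 := fun k hk =>
    Matrix.mul_nonsing_inv _ ((hSpd k hk).isUnit.map detMonoidHom)
  have hinv' : ∀ k, k ≤ t → (S k)⁻¹ * S k = 1 := fun k hk =>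
    Matrix.nonsing_inv_mul _ ((hSpd k hk).isUnit.map detMonoidHom)
  -- commutation
  have hcomm : ∀ j k, S j * S k = S k * S j := by
    intro j k
    rw [hS j, hS k]
    simp only [Matrix.add_mul, Matrix.mul_add, Matrix.smul_mul, Matrix.mul_smul,
      Matrix.mul_one, Matrix.one_mul]
    module
  have hcomm_inv : ∀ j k, j ≤ t → S k * (S j)⁻¹ = (S j)⁻¹ * S k := by
    intro j k hj
    calc S k * (S j)⁻¹ = 1 * (S k * (S j)⁻¹) := by rw [Matrix.one_mul]
      _ = (S j)⁻¹ * (S j * S k) * (S j)⁻¹ := by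
          rw [← hinv' j hj]; simp only [Matrix.mul_assoc]
      _ = (S j)⁻¹ * (S k * S j) * (S j)⁻¹ := by rw [hcomm]
      _ = (S j)⁻¹ * (S k * (S j * (S j)⁻¹)) := by simp only [Matrix.mul_assoc]
      _ = (S j)⁻¹ * S k := by rw [hinv j hj, Matrix.mul_one]
  -- the key telescoping identity
  have key : ∀ i, 2 ≤ i → i ≤ t →
      (alb (i-1) * β i) • (S0 * (S (i-1))⁻¹ * (S i)⁻¹)
        = (1 - alb i) • (S i)⁻¹ - (1 - alb (i-1)) • (S (i-1))⁻¹ := by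
    intro i h2 hit
    have hi1t : i - 1 ≤ t := le_trans (Nat.sub_le i 1) hit
    have hsub : i - 1 + 1 = i := by omega
    -- scalar identity on matrices
    have hmat : (alb (i-1) * β i) • S0
        = (1 - alb i) • S (i-1) - (1 - alb (i-1)) • S i := by
      have h1 : alb i = alb (i-1) * al i := by rw [← hsub, halb_succ, hsub]
      rw [hS (i-1), hS i, h1, hal i]
      module
    calc (alb (i-1) * β i) • (S0 * (S (i-1))⁻¹ * (S i)⁻¹)
        = ((alb (i-1) * β i) • S0) * (S (i-1))⁻¹ * (S i)⁻¹ := by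
          simp [Matrix.smul_mul]
      _ = ((1 - alb i) • S (i-1) - (1 - alb (i-1)) • S i) * (S (i-1))⁻¹ * (S i)⁻¹ := by
          rw [hmat]
      _ = (1 - alb i) • (S i)⁻¹ - (1 - alb (i-1)) • (S (i-1))⁻¹ := by
          rw [Matrix.sub_mul, Matrix.sub_mul, Matrix.smul_mul, Matrix.smul_mul,
            Matrix.smul_mul, Matrix.smul_mul, hinv (i-1) hi1t]
          congr 1
          · rw [Matrix.one_mul]
          · rw [hcomm_inv (i-1) i hi1t, Matrix.mul_assoc, hinv i hit, Matrix.mul_one]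
  -- rewrite the sum using key, then telescope
  rw [Finset.sum_congr rfl (fun i hi => by
    obtain ⟨h2, hit⟩ := Finset.mem_Icc.mp hi
    exact key i h2 hit)]
  have htel : (∑ i ∈ Finset.Icc 2 t,
      ((1 - alb i) • (S i)⁻¹ - (1 - alb (i-1)) • (S (i-1))⁻¹))
      = (1 - alb t) • (S t)⁻¹ - (1 - alb 1) • (S 1)⁻¹ := by
    set g : ℕ → Matrix (Fin d) (Fin d) ℝ := fun k => (1 - alb (k+1)) • (S (k+1))⁻¹ with hg
    rw [← Finset.Ico_add_one_right_eq_Icc, Finset.sum_Ico_eq_sum_range]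
    have hr : t + 1 - 2 = t - 1 := by omega
    rw [hr]
    have hstep : ∀ j ∈ Finset.range (t-1),
        ((1 - alb (2+j)) • (S (2+j))⁻¹ - (1 - alb (2+j-1)) • (S (2+j-1))⁻¹)
        = g (j+1) - g j := by
      intro j _
      have e1 : 2 + j = j + 1 + 1 := by omega
      have e2 : 2 + j - 1 = j + 1 := by omega
      rw [e2, e1, hg]
    rw [Finset.sum_congr rfl hstep, Finset.sum_range_sub g]
    have e3 : t - 1 + 1 = t := by omega
    rw [hg]
    simp only [e3, zero_add]
  rw [htel]
  have hb1 : β 1 = 1 - alb 1 := by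
    rw [halb]; simp [hal 1]
  rw [hb1]
  abel
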